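/- Let F(x,t) = t² ln(1 + t² sin²(2π x₁)), f(x,t) = 2t ln(1 + t² sin²(2π x₁)) + 2t³ sin²(2π x₁)/(1 + t² sin²(2π x₁)), and 𝓕(x,t) = (1/2) t f(x,t) − F(x,t) = t⁴ sin²(2π x₁)/(1 + t² sin²(2π x₁)). Then for every κ > 1 and every λ > 0 there exists c₀ > 0 such that for all x ∈ ℝᴺ and all t ≠ 0 with f(x,t)/t ≥ λ, one has (f(x,t)/t)^κ ≤ c₀ 𝓕(x,t). In particular this f satisfies condition (F4) with any κ > max{1, N/2}. -/

import Mathlib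

open Real

lemma key_F4 (κ lam : ℝ) (hκ : 1 < κ) (hlam : 0 < lam) :
    ∃ c₀ > (0:ℝ), ∀ y : ℝ, 0 ≤ y →
      lam ≤ 2 * Real.log (1 + y) + 2 * y / (1 + y) →
      (2 * Real.log (1 + y) + 2 * y / (1 + y)) ^ κ ≤ c₀ * (y ^ 2 / (1 + y)) := by
  have hκ0 : 0 < κ := by linarith
  set a : ℝ := 1 / (2 * κ) with ha_def
  have ha : 0 < a := by positivity
  set C : ℝ := 4 * κ + 2 with hC_def
  have hC : 0 < C := by positivity
  set m : ℝ := lam / 4 with hm_def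
  have hm : 0 < m := by positivity
  set K : ℝ := Real.sqrt ((1 + 1 / m) ^ 3 / m) with hK_def
  have hKarg : 0 < (1 + 1 / m) ^ 3 / m := by positivity
  have hK : 0 < K := Real.sqrt_pos.2 hKarg
  refine ⟨C ^ κ * K, by positivity, ?_⟩
  intro y hy hg
  have h1y : (0:ℝ) < 1 + y := by linarith
  set L : ℝ := Real.log (1 + y) with hL_def
  -- L ≤ y
  have hLy : L ≤ y := by
    have := Real.log_le_sub_one_of_pos h1y
    linarith
  -- 2y/(1+y) ≤ 2y
  have hfrac : 2 * y / (1 + y) ≤ 2 * y :=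
    div_le_self (by positivity) (by linarith)
  -- y ≥ m
  have hym : m ≤ y := by
    have : lam ≤ 4 * y := by linarith
    rw [hm_def]; linarith
  have hy0 : 0 < y := lt_of_lt_of_le hm hym
  -- L ≤ (1+y)^a / a
  have hLa : L ≤ (1 + y) ^ a / a := by
    have h1 : Real.log ((1 + y) ^ a) = a * L := Real.log_rpow h1y a
    have h2 : Real.log ((1 + y) ^ a) ≤ (1 + y) ^ a - 1 :=
      Real.log_le_sub_one_of_pos (Real.rpow_pos_of_pos h1y a)
    have h3 : a * L ≤ (1 + y) ^ a := by rw [← h1]; linarith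
    rw [le_div_iff₀ ha]
    linarith [mul_comm a L]
  have hP : 1 ≤ (1 + y) ^ a := by
    have := Real.rpow_le_rpow (by norm_num : (0:ℝ) ≤ 1) (by linarith : (1:ℝ) ≤ 1 + y) ha.le
    simpa using this
  -- frac ≤ 2
  have hfrac2 : 2 * y / (1 + y) ≤ 2 := by
    rw [div_le_iff₀ h1y]; linarith
  -- g ≤ C * (1+y)^a
  have hgC : 2 * L + 2 * y / (1 + y) ≤ C * (1 + y) ^ a := by
    have h2a : 2 / a = 4 * κ := by rw [ha_def]; field_simp; ring
    have : 2 * L ≤ 4 * κ * (1 + y) ^ a := by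
      have := hLa
      have h4 : 2 * L ≤ 2 * ((1 + y) ^ a / a) := by linarith
      calc 2 * L ≤ 2 * ((1 + y) ^ a / a) := h4
        _ = (2 / a) * (1 + y) ^ a := by ring
        _ = 4 * κ * (1 + y) ^ a := by rw [h2a]
    have h5 : (2:ℝ) ≤ 2 * (1 + y) ^ a := by linarith
    calc 2 * L + 2 * y / (1 + y) ≤ 4 * κ * (1 + y) ^ a + 2 * (1 + y) ^ a := by linarith
      _ = C * (1 + y) ^ a := by rw [hC_def]; ring
  have hg0 : 0 ≤ 2 * L + 2 * y / (1 + y) := le_trans hlam.le hg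
  -- raise to κ
  have step6 : (2 * L + 2 * y / (1 + y)) ^ κ ≤ C ^ κ * Real.sqrt (1 + y) := by
    have h1 : (2 * L + 2 * y / (1 + y)) ^ κ ≤ (C * (1 + y) ^ a) ^ κ :=
      Real.rpow_le_rpow hg0 hgC hκ0.le
    have h2 : (C * (1 + y) ^ a) ^ κ = C ^ κ * ((1 + y) ^ a) ^ κ :=
      Real.mul_rpow hC.le (Real.rpow_pos_of_pos h1y a).le
    have h3 : ((1 + y) ^ a) ^ κ = (1 + y) ^ (a * κ) :=
      (Real.rpow_mul h1y.le a κ).symm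
    have h4 : a * κ = 1 / 2 := by rw [ha_def]; field_simp
    have h5 : (1 + y) ^ ((1:ℝ) / 2) = Real.sqrt (1 + y) :=
      (Real.sqrt_eq_rpow (1 + y)).symm
    rw [h2, h3, h4, h5] at h1
    exact h1
  -- sqrt(1+y) ≤ K * (y²/(1+y))
  have step7 : Real.sqrt (1 + y) ≤ K * (y ^ 2 / (1 + y)) := by
    have hK2 : K ^ 2 = (1 + 1 / m) ^ 3 / m := Real.sq_sqrt hKarg.le
    have h1m : 1 ≤ y / m := (one_le_div hm).2 hym
    have h31 : 1 + y ≤ (1 + 1 / m) * y := by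
      have : (1 + 1 / m) * y = y + y / m := by field_simp
      rw [this]
      have : 1 ≤ y / m := h1m
      linarith
    have h3 : (1 + y) ^ 3 ≤ K ^ 2 * y ^ 4 := by
      have hc1 : (1 + y) ^ 3 ≤ ((1 + 1 / m) * y) ^ 3 :=
        pow_le_pow_left₀ h1y.le h31 3
      have hc2 : ((1 + 1 / m) * y) ^ 3 = (1 + 1 / m) ^ 3 * y ^ 3 := by ring
      have hc3 : (1 + 1 / m) ^ 3 * y ^ 3 ≤ (1 + 1 / m) ^ 3 / m * y ^ 4 := by
        rw [div_mul_eq_mul_div, le_div_iff₀ hm]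
        have h0 : m * y ^ 3 ≤ y * y ^ 3 :=
          mul_le_mul_of_nonneg_right hym (by positivity)
        have h1 := mul_le_mul_of_nonneg_left h0
          (pow_nonneg (by positivity : (0:ℝ) ≤ 1 + 1 / m) 3)
        nlinarith [h1]
      rw [hK2]
      calc (1 + y) ^ 3 ≤ (1 + 1 / m) ^ 3 * y ^ 3 := by rw [← hc2]; exact hc1
        _ ≤ (1 + 1 / m) ^ 3 / m * y ^ 4 := hc3
    have hrhs : (K * (y ^ 2 / (1 + y))) ^ 2 = K ^ 2 * y ^ 4 / (1 + y) ^ 2 := by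
      field_simp
    have hineq : 1 + y ≤ (K * (y ^ 2 / (1 + y))) ^ 2 := by
      rw [hrhs, le_div_iff₀ (by positivity)]
      nlinarith [h3]
    have := Real.sqrt_le_sqrt hineq
    rwa [Real.sqrt_sq (by positivity)] at this
  calc (2 * L + 2 * y / (1 + y)) ^ κ ≤ C ^ κ * Real.sqrt (1 + y) := step6
    _ ≤ C ^ κ * (K * (y ^ 2 / (1 + y))) :=
        mul_le_mul_of_nonneg_left step7 (Real.rpow_pos_of_pos hC κ).le
    _ = C ^ κ * K * (y ^ 2 / (1 + y)) := by ring

/-- **Example 1.1 satisfies (F4).** With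
`f(x,t) = 2t ln(1 + t² sin²(2π x₁)) + 2t³ sin²(2π x₁)/(1 + t² sin²(2π x₁))` and
`𝓕(x,t) = t⁴ sin²(2π x₁)/(1 + t² sin²(2π x₁))`, for every `κ > 1` and `λ > 0`
there is `c₀ > 0` such that `t ≠ 0` and `f(x,t)/t ≥ λ` imply
`(f(x,t)/t)^κ ≤ c₀ 𝓕(x,t)`. In particular (F4) holds for any
`κ > max{1, N/2}`. -/
theorem example_1_1_satisfies_F4 (N : ℕ) (hN : 0 < N)
    (f 𝓕 : (Fin N → ℝ) → ℝ → ℝ)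
    (hf : ∀ x t, f x t =
      2 * t * Real.log (1 + t ^ 2 * Real.sin (2 * π * x ⟨0, hN⟩) ^ 2)
        + 2 * t ^ 3 * Real.sin (2 * π * x ⟨0, hN⟩) ^ 2
            / (1 + t ^ 2 * Real.sin (2 * π * x ⟨0, hN⟩) ^ 2))
    (h𝓕 : ∀ x t, 𝓕 x t =
      t ^ 4 * Real.sin (2 * π * x ⟨0, hN⟩) ^ 2
        / (1 + t ^ 2 * Real.sin (2 * π * x ⟨0, hN⟩) ^ 2)) :
    ∀ κ : ℝ, 1 < κ → ∀ lam : ℝ, 0 < lam →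
      ∃ c₀ > (0:ℝ), ∀ (x : Fin N → ℝ) (t : ℝ), t ≠ 0 → lam ≤ f x t / t →
        (f x t / t) ^ κ ≤ c₀ * 𝓕 x t := by
  intro κ hκ lam hlam
  obtain ⟨c₀, hc₀, H⟩ := key_F4 κ lam hκ hlam
  refine ⟨c₀, hc₀, ?_⟩
  intro x t ht hge
  set s : ℝ := Real.sin (2 * π * x ⟨0, hN⟩) ^ 2 with hs_def
  have hs0 : 0 ≤ s := sq_nonneg _
  have hs1 : s ≤ 1 := sin_sq_le_one _
  set y : ℝ := t ^ 2 * s with hy_def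
  have hy : 0 ≤ y := by positivity
  have h1y : (0:ℝ) < 1 + y := by linarith
  have heq : f x t / t = 2 * Real.log (1 + y) + 2 * y / (1 + y) := by
    rw [hf]
    rw [← hs_def, ← hy_def]
    field_simp
    ring
  rw [heq] at hge ⊢
  rw [h𝓕, ← hs_def, ← hy_def]
  have hmain := H y hy hge
  have hle : y ^ 2 / (1 + y) ≤ t ^ 4 * s / (1 + y) := by
    refine (div_le_div_iff_of_pos_right h1y).2 ?_
    have h0 : 0 ≤ t ^ 4 * (s * (1 - s)) :=
      mul_nonneg (by positivity) (mul_nonneg hs0 (by linarith))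
    nlinarith [h0]
  calc (2 * Real.log (1 + y) + 2 * y / (1 + y)) ^ κ ≤ c₀ * (y ^ 2 / (1 + y)) := hmain
    _ ≤ c₀ * (t ^ 4 * s / (1 + y)) := mul_le_mul_of_nonneg_left hle hc₀.le
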